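/- (Offset-independence of the normalization algorithm, finite-sample version.) Let G be a group which is also a metric space whose metric is right-invariant (dist(a·c, b·c) = dist(a, b) for all a, b, c ∈ G). Let g₁, …, g_N ∈ G and Γ ∈ G. If ĝ ∈ G minimizes the empirical Fréchet functional y ↦ ∑_{i=1}^N dist(y, g_i)² over G, then ĝ·Γ minimizes y ↦ ∑_{i=1}^N dist(y, g_i·Γ)² over G, and moreover (g_i·Γ)·(ĝ·Γ)⁻¹ = g_i·ĝ⁻¹ for every i. Hence the normalized samples produced from the right-translated data {g_i·Γ} coincide with those produced from the original data {g_i}: the output of canonical orientation normalization is independent of the arbitrary offset Γ. -/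
import Mathlib

/-- Offset-independence of canonical orientation normalization (finite-sample version):
for a right-invariant metric on a group `G`, if `ghat` minimizes the empirical Fréchet
functional of samples `g₁, …, g_N`, then `ghat * Γ` minimizes the empirical Fréchet
functional of the right-translated samples `gᵢ * Γ`, and the normalized samples
coincide: `(gᵢ * Γ) * (ghat * Γ)⁻¹ = gᵢ * ghat⁻¹` for every `i`. -/
theorem empirical_normalization_offset_independent {G : Type*} [Group G] [MetricSpace G]
    (hinv : ∀ a b c : G, dist (a * c) (b * c) = dist a b)
    {N : ℕ} (g : Fin N → G) (Γ ghat : G)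
    (hmin : ∀ y : G, (∑ i, dist ghat (g i) ^ 2) ≤ ∑ i, dist y (g i) ^ 2) :
    (∀ y : G, (∑ i, dist (ghat * Γ) (g i * Γ) ^ 2) ≤ ∑ i, dist y (g i * Γ) ^ 2) ∧
      ∀ i : Fin N, (g i * Γ) * (ghat * Γ)⁻¹ = g i * ghat⁻¹ := by
  constructor
  · intro y
    have h1 : ∀ i, dist (ghat * Γ) (g i * Γ) = dist ghat (g i) := fun i => hinv _ _ _
    have h2 : ∀ i, dist y (g i * Γ) = dist (y * Γ⁻¹) (g i) := by
      intro i
      have := hinv (y * Γ⁻¹) (g i) Γ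
      simpa using this
    simp only [h1, h2]
    exact hmin _
  · intro i
    group
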